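/- Suppose f : ℝ^n → ℝ is L_f-smooth and μ_f-strongly convex with conjugate f*, and A ∈ ℝ^{m×n} has minimum nonzero singular value σ̲_min > 0. Then Φ(λ) := -⟨b,λ⟩ - f*(-Aᵀλ) is strongly concave with modulus σ̲_min²/L_f when restricted to the range of A: for all λ, λ' ∈ Range(A), Φ(λ') ≤ Φ(λ) + ⟨∇Φ(λ), λ'-λ⟩ - (σ̲_min²/(2L_f))‖λ - λ'‖². -/

import Mathlib

open RealInnerProductSpace

section Aux
variable {E : Type*} [NormedAddCommGroup E] [InnerProductSpace ℝ E] [CompleteSpace E]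


lemma aux_hasGradientAt_of_sq_bound {E : Type*} [NormedAddCommGroup E] [InnerProductSpace ℝ E]
    [CompleteSpace E] {g : E → ℝ} {a x : E} {C : ℝ}
    (h : ∀ y, |g y - g x - ⟪a, y - x⟫| ≤ C * ‖y - x‖ ^ 2) : HasGradientAt g a x := by
  rw [hasGradientAt_iff_isLittleO, Asymptotics.isLittleO_iff]
  intro c hc
  rw [Metric.eventually_nhds_iff]
  refine ⟨c / (|C| + 1), by positivity, fun y hy => ?_⟩
  have hd : ‖y - x‖ < c / (|C| + 1) := by rwa [← dist_eq_norm]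
  have hd0 : (0:ℝ) ≤ ‖y - x‖ := norm_nonneg _
  have h1 : |g y - g x - ⟪a, y - x⟫| ≤ (|C| + 1) * ‖y - x‖ * ‖y - x‖ := by
    refine (h y).trans ?_
    nlinarith [le_abs_self C]
  have h2 : (|C| + 1) * ‖y - x‖ ≤ c := by
    have : (0:ℝ) < |C| + 1 := by positivity
    calc (|C| + 1) * ‖y - x‖ ≤ (|C| + 1) * (c / (|C| + 1)) := by nlinarith
    _ = c := by field_simp
  calc ‖g y - g x - ⟪a, y - x⟫‖ = |g y - g x - ⟪a, y - x⟫| := Real.norm_eq_abs _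
  _ ≤ (|C| + 1) * ‖y - x‖ * ‖y - x‖ := h1
  _ ≤ c * ‖y - x‖ := by nlinarith

lemma aux_hasGradientAt_sub {E : Type*} [NormedAddCommGroup E] [InnerProductSpace ℝ E]
    [CompleteSpace E] {g h : E → ℝ} {a b x : E}
    (hg : HasGradientAt g a x) (hh : HasGradientAt h b x) :
    HasGradientAt (fun y => g y - h y) (a - b) x := by
  have := hg.hasFDerivAt.sub hh.hasFDerivAt
  rw [← map_sub] at this
  exact hasGradientAt_iff_hasFDerivAt.mpr this

lemma aux_hasGradientAt_normsq {E : Type*} [NormedAddCommGroup E] [InnerProductSpace ℝ E]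
    [CompleteSpace E] (μ : ℝ) (x : E) :
    HasGradientAt (fun y => μ / 2 * ‖y‖ ^ 2) (μ • x) x := by
  apply aux_hasGradientAt_of_sq_bound (C := |μ| / 2)
  intro y
  have h1 : ‖y - x‖ ^ 2 = ‖y‖ ^ 2 - 2 * ⟪y, x⟫ + ‖x‖ ^ 2 := norm_sub_sq_real y x
  have h2 : ⟪μ • x, y - x⟫ = μ * ⟪y, x⟫ - μ * ‖x‖^2 := by
    rw [real_inner_smul_left, inner_sub_right, real_inner_self_eq_norm_sq, real_inner_comm]
    ring
  rw [h2]
  have : μ / 2 * ‖y‖ ^ 2 - μ / 2 * ‖x‖ ^ 2 - (μ * ⟪y, x⟫ - μ * ‖x‖ ^ 2) = μ / 2 * ‖y - x‖^2 := by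
    rw [h1]; ring
  rw [this, abs_mul, abs_div, abs_two, abs_of_nonneg (by positivity : (0:ℝ) ≤ ‖y - x‖^2)]

lemma aux_hasGradientAt_inner {E : Type*} [NormedAddCommGroup E] [InnerProductSpace ℝ E]
    [CompleteSpace E] (u : E) (x : E) :
    HasGradientAt (fun y => ⟪u, y⟫) u x := by
  apply aux_hasGradientAt_of_sq_bound (C := 0)
  intro y
  have : ⟪u, y⟫ - ⟪u, x⟫ - ⟪u, y - x⟫ = 0 := by rw [inner_sub_right]; ring
  simp [this]



lemma aux_line_hasDerivAt (g : E → ℝ) (hg : Differentiable ℝ g) (x v : E) (t : ℝ) :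
    HasDerivAt (fun s : ℝ => g (x + s • v)) ⟪gradient g (x + t • v), v⟫ t := by
  have hline : HasDerivAt (fun s : ℝ => x + s • v) v t := by
    simpa using ((hasDerivAt_id t).smul_const v).const_add x
  have hf := ((hg (x + t • v)).hasGradientAt).hasFDerivAt
  have := hf.comp_hasDerivAt t hline
  exact this

/-- gradient inequality for differentiable convex functions -/
lemma aux_convex_grad_ineq {g : E → ℝ} (hg : ConvexOn ℝ Set.univ g)
    (hd : Differentiable ℝ g) (x y : E) :
    g x + ⟪gradient g x, y - x⟫ ≤ g y := by
  set φ : ℝ → ℝ := fun t => g (x + t • (y - x)) with hφ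
  have hφconv : ConvexOn ℝ Set.univ φ := by
    have := hg.comp_affineMap (AffineMap.lineMap x y : ℝ →ᵃ[ℝ] E)
    simp only [Set.preimage_univ] at this
    rw [show φ = g ∘ AffineMap.lineMap x y from by
      funext t
      simp [hφ, AffineMap.lineMap_apply, add_comm]]
    exact this
  have hder : HasDerivAt φ ⟪gradient g (x + (0:ℝ) • (y - x)), y - x⟫ 0 :=
    aux_line_hasDerivAt g hd x (y - x) 0
  simp only [zero_smul, add_zero] at hder
  have hslope := hφconv.le_slope_of_hasDerivAt (Set.mem_univ 0) (Set.mem_univ 1)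
    one_pos hder
  have h0 : φ 0 = g x := by simp [hφ]
  have h1 : φ 1 = g y := by simp [hφ]
  rw [slope_def_field] at hslope
  simp [h0, h1] at hslope
  have hfd : ⟪gradient g x, y - x⟫ = fderiv ℝ g x y - fderiv ℝ g x x := by simp [inner_sub_right]
  linarith

/-- descent lemma from Lipschitz gradient -/
lemma aux_descent {g : E → ℝ} {L : ℝ} (hL : 0 < L) (hd : Differentiable ℝ g)
    (hsm : ∀ x x', ‖gradient g x - gradient g x'‖ ≤ L * ‖x - x'‖) (x y : E) :
    g y ≤ g x + ⟪gradient g x, y - x⟫ + L / 2 * ‖y - x‖ ^ 2 := by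
  set v := y - x with hv
  set ψ : ℝ → ℝ := fun t => g (x + t • v) - t * ⟪gradient g x, v⟫ - L / 2 * t ^ 2 * ‖v‖ ^ 2
    with hψ
  have hψ' : ∀ t : ℝ, HasDerivAt ψ
      (⟪gradient g (x + t • v), v⟫ - ⟪gradient g x, v⟫ - L * t * ‖v‖ ^ 2) t := by
    intro t
    have h1 := aux_line_hasDerivAt g hd x v t
    have h2 : HasDerivAt (fun t : ℝ => t * ⟪gradient g x, v⟫) ⟪gradient g x, v⟫ t := by
      simpa using (hasDerivAt_id t).mul_const ⟪gradient g x, v⟫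
    have h3 : HasDerivAt (fun t : ℝ => L / 2 * t ^ 2 * ‖v‖ ^ 2) (L * t * ‖v‖ ^ 2) t := by
      have := ((hasDerivAt_pow 2 t).const_mul (L / 2)).mul_const (‖v‖ ^ 2)
      refine this.congr_deriv ?_
      ring
    exact (h1.sub h2).sub h3
  have hkey : ∀ t ∈ Set.Icc (0:ℝ) 1,
      ⟪gradient g (x + t • v), v⟫ - ⟪gradient g x, v⟫ - L * t * ‖v‖ ^ 2 ≤ 0 := by
    intro t ht
    have h4 : ⟪gradient g (x + t • v) - gradient g x, v⟫ ≤ ‖gradient g (x + t • v) - gradient g x‖ * ‖v‖ :=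
      real_inner_le_norm _ _
    have h5 : ‖gradient g (x + t • v) - gradient g x‖ ≤ L * (t * ‖v‖) := by
      have := hsm (x + t • v) x
      simpa [norm_smul, abs_of_nonneg ht.1] using this
    have h6 : ⟪gradient g (x + t • v) - gradient g x, v⟫ = ⟪gradient g (x + t • v), v⟫ - ⟪gradient g x, v⟫ := by
      rw [inner_sub_left]
    nlinarith [norm_nonneg v]
  have hanti : AntitoneOn ψ (Set.Icc (0:ℝ) 1) := by
    apply antitoneOn_of_deriv_nonpos (convex_Icc 0 1)
    · exact fun t _ => ((hψ' t).differentiableAt.continuousAt).continuousWithinAt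
    · exact fun t _ => (hψ' t).differentiableAt.differentiableWithinAt
    · intro t ht
      rw [interior_Icc] at ht
      rw [(hψ' t).deriv]
      exact hkey t ⟨le_of_lt ht.1, le_of_lt ht.2⟩
  have := hanti (Set.mem_Icc.mpr ⟨le_refl 0, zero_le_one⟩) (Set.mem_Icc.mpr ⟨zero_le_one, le_refl 1⟩) zero_le_one
  have h0 : ψ 0 = g x := by simp [hψ]
  have h1 : ψ 1 = g y - ⟪gradient g x, v⟫ - L / 2 * ‖v‖ ^ 2 := by simp [hψ, hv]
  rw [h0, h1] at this
  linarith

lemma aux_strong_ineq {f : E → ℝ} {μ : ℝ} (hd : Differentiable ℝ f)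
    (hsc : ConvexOn ℝ Set.univ (fun x => f x - μ / 2 * ‖x‖ ^ 2)) (x y : E) :
    f x + ⟪gradient f x, y - x⟫ + μ / 2 * ‖y - x‖ ^ 2 ≤ f y := by
  have hg_grad : ∀ z : E, HasGradientAt (fun w => f w - μ / 2 * ‖w‖ ^ 2)
      (gradient f z - μ • z) z :=
    fun z => aux_hasGradientAt_sub (hd z).hasGradientAt (aux_hasGradientAt_normsq μ z)
  have hgd : Differentiable ℝ (fun w => f w - μ / 2 * ‖w‖ ^ 2) :=
    fun z => (hg_grad z).differentiableAt
  have h := aux_convex_grad_ineq hsc hgd x y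
  rw [(hg_grad x).gradient] at h
  have h2 : ⟪gradient f x - μ • x, y - x⟫
      = ⟪gradient f x, y - x⟫ - μ * ⟪x, y⟫ + μ * ‖x‖ ^ 2 := by
    simp only [inner_sub_left, inner_sub_right, real_inner_smul_left,
      real_inner_self_eq_norm_sq]
    ring
  have h3 : ‖y - x‖ ^ 2 = ‖y‖ ^ 2 - 2 * ⟪x, y⟫ + ‖x‖ ^ 2 := by
    rw [norm_sub_sq_real, real_inner_comm]
  rw [h2] at h
  have h3' : μ / 2 * ‖y - x‖ ^ 2 = μ / 2 * ‖y‖ ^ 2 - μ * ⟪x, y⟫ + μ / 2 * ‖x‖ ^ 2 := by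
    rw [h3]; ring
  linarith [h3']

lemma aux_grad_surj [FiniteDimensional ℝ E] {f : E → ℝ} {μ : ℝ} (hμ : 0 < μ)
    (hd : Differentiable ℝ f)
    (hstrong : ∀ x y : E, f x + ⟪gradient f x, y - x⟫ + μ / 2 * ‖y - x‖ ^ 2 ≤ f y)
    (u : E) : ∃ x, gradient f x = u := by
  set h : E → ℝ := fun z => f z - ⟪u, z⟫ with hh
  have hh_grad : ∀ z : E, HasGradientAt h (gradient f z - u) z :=
    fun z => aux_hasGradientAt_sub (hd z).hasGradientAt (aux_hasGradientAt_inner u z)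
  have hh_strong : ∀ z y : E, h z + ⟪gradient f z - u, y - z⟫ + μ / 2 * ‖y - z‖ ^ 2 ≤ h y := by
    intro z y
    have := hstrong z y
    have h4 : ⟪gradient f z - u, y - z⟫ = ⟪gradient f z, y - z⟫ - ⟪u, y⟫ + ⟪u, z⟫ := by
      simp only [inner_sub_left, inner_sub_right]; ring
    simp only [hh]
    rw [h4]
    linarith
  set c := ‖gradient f 0 - u‖ with hc
  have hc0 : 0 ≤ c := norm_nonneg _
  set R := 2 * c / μ + 1 with hR
  have hR0 : 0 < R := by positivity
  have hcont : Continuous h := by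
    exact continuous_iff_continuousAt.mpr fun z => (hh_grad z).differentiableAt.continuousAt
  obtain ⟨x₀, hx₀mem, hx₀min⟩ := (isCompact_closedBall (0:E) R).exists_isMinOn
    ⟨0, Metric.mem_closedBall_self hR0.le⟩ hcont.continuousOn
  have hglobal : ∀ y : E, h x₀ ≤ h y := by
    intro y
    by_cases hy : ‖y‖ ≤ R
    · exact hx₀min (by simpa [Metric.mem_closedBall, dist_eq_norm] using hy)
    · push_neg at hy
      have h5 := hh_strong 0 y
      simp only [sub_zero] at h5
      have h6 : ⟪gradient f 0 - u, y⟫ ≥ -(c * ‖y‖) := by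
        have := abs_real_inner_le_norm (gradient f 0 - u) y
        rw [← hc] at this
        cases abs_le.mp this with
        | intro h1 h2 => linarith
      have hμR : μ * R = 2 * c + μ := by rw [hR]; field_simp
      have h71 : μ * ‖y‖ ≥ 2 * c + μ := by
        rw [← hμR]; exact mul_le_mul_of_nonneg_left hy.le hμ.le
      have h7 : μ / 2 * ‖y‖ ^ 2 - c * ‖y‖ ≥ 0 := by nlinarith [norm_nonneg y, hμ]
      have h8 : h 0 ≤ h y := by
        clear_value h c R
        linarith
      exact le_trans (hx₀min (Metric.mem_closedBall_self hR0.le)) h8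
  have hloc : IsLocalMin h x₀ := Filter.Eventually.of_forall hglobal
  have hzero := hloc.hasFDerivAt_eq_zero (hh_grad x₀).hasFDerivAt
  refine ⟨x₀, ?_⟩
  have h9 := congrFun (congrArg DFunLike.coe hzero) (gradient f x₀ - u)
  simp only [InnerProductSpace.toDual_apply_apply, ContinuousLinearMap.zero_apply] at h9
  have h10 := inner_self_eq_zero.mp h9
  rw [sub_eq_zero] at h10
  exact h10

/-- value of the conjugate at a point where the gradient is attained -/
lemma aux_fstar_eq {f : E → ℝ} {μ : ℝ} (hμ : 0 < μ)
    (hstrong : ∀ x y : E, f x + ⟪gradient f x, y - x⟫ + μ / 2 * ‖y - x‖ ^ 2 ≤ f y)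
    {fstar : E → ℝ} (hfstar : ∀ y, IsLUB (Set.range fun x => ⟪x, y⟫ - f x) (fstar y))
    {u x : E} (hx : gradient f x = u) : fstar u = ⟪x, u⟫ - f x := by
  apply le_antisymm
  · apply (hfstar u).2
    rintro _ ⟨z, rfl⟩
    have h1 := hstrong x z
    rw [hx] at h1
    have e1 : ⟪u, z - x⟫ = ⟪z, u⟫ - ⟪x, u⟫ := by
      rw [inner_sub_right, real_inner_comm u z, real_inner_comm u x]
    have e2 : (0:ℝ) ≤ μ / 2 * ‖z - x‖ ^ 2 := by positivity
    simp only
    linarith [e1 ▸ h1]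
  · exact (hfstar u).1 ⟨x, rfl⟩

/-- strong convexity of the conjugate from smoothness of `f` -/
lemma aux_fstar_lower {f : E → ℝ} {L : ℝ} (hL : 0 < L)
    (hdesc : ∀ x y : E, f y ≤ f x + ⟪gradient f x, y - x⟫ + L / 2 * ‖y - x‖ ^ 2)
    {fstar : E → ℝ} (hfstar : ∀ y, IsLUB (Set.range fun x => ⟪x, y⟫ - f x) (fstar y))
    {u x : E} (hx : gradient f x = u) (hval : fstar u = ⟪x, u⟫ - f x) (u' : E) :
    fstar u + ⟪x, u' - u⟫ + 1 / (2 * L) * ‖u' - u‖ ^ 2 ≤ fstar u' := by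
  set x' := x + (1 / L) • (u' - u) with hx'
  have h1 : ⟪x', u'⟫ - f x' ≤ fstar u' := (hfstar u').1 ⟨x', rfl⟩
  have h2 : f x' ≤ f x + ⟪u, x' - x⟫ + L / 2 * ‖x' - x‖ ^ 2 := by
    have := hdesc x x'; rwa [hx] at this
  have h3 : x' - x = (1 / L) • (u' - u) := by rw [hx']; abel
  have e1 : ‖x' - x‖ ^ 2 = (1 / L) ^ 2 * ‖u' - u‖ ^ 2 := by
    rw [h3, norm_smul, mul_pow, Real.norm_eq_abs, abs_of_pos (by positivity : (0:ℝ) < 1 / L)]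
  have e2 : ⟪u, x' - x⟫ = (1 / L) * ⟪u, u' - u⟫ := by rw [h3, real_inner_smul_right]
  have e3 : ⟪x', u'⟫ = ⟪x, u'⟫ + (1 / L) * ⟪u' - u, u'⟫ := by
    rw [hx', inner_add_left, real_inner_smul_left]
  have e4 : ⟪x, u' - u⟫ = ⟪x, u'⟫ - ⟪x, u⟫ := inner_sub_right x u' u
  have e5 : ⟪u' - u, u'⟫ - ⟪u, u' - u⟫ = ‖u' - u‖ ^ 2 := by
    have t := real_inner_self_eq_norm_sq (u' - u)
    simp only [inner_sub_left, inner_sub_right, real_inner_comm u' u] at t ⊢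
    linarith [t]
  have e6 : (1 / L) * ‖u' - u‖ ^ 2 - L / 2 * ((1 / L) ^ 2 * ‖u' - u‖ ^ 2)
      = 1 / (2 * L) * ‖u' - u‖ ^ 2 := by field_simp; ring
  rw [e2, e1] at h2
  rw [e3] at h1
  have e5' : (1 / L) * ⟪u' - u, u'⟫ - (1 / L) * ⟪u, u' - u⟫ = (1 / L) * ‖u' - u‖ ^ 2 := by
    rw [← mul_sub, e5]
  rw [hval]
  linarith [h1, h2, e4, e5', e6]

/-- upper quadratic bound for the conjugate from strong convexity of `f` -/
lemma aux_fstar_upper {f : E → ℝ} {μ : ℝ} (hμ : 0 < μ)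
    (hstrong : ∀ x y : E, f x + ⟪gradient f x, y - x⟫ + μ / 2 * ‖y - x‖ ^ 2 ≤ f y)
    {fstar : E → ℝ} (hfstar : ∀ y, IsLUB (Set.range fun x => ⟪x, y⟫ - f x) (fstar y))
    {u x : E} (hx : gradient f x = u) (hval : fstar u = ⟪x, u⟫ - f x) (u' : E) :
    fstar u' ≤ fstar u + ⟪x, u' - u⟫ + 1 / (2 * μ) * ‖u' - u‖ ^ 2 := by
  apply (hfstar u').2
  rintro _ ⟨z, rfl⟩
  have h1 := hstrong x z
  rw [hx] at h1
  -- Cauchy-Schwarz + AM-GM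
  have cs : ⟪z - x, u' - u⟫ ≤ ‖z - x‖ * ‖u' - u‖ := real_inner_le_norm _ _
  have h4 : ⟪z - x, u' - u⟫ ≤ μ / 2 * ‖z - x‖ ^ 2 + 1 / (2 * μ) * ‖u' - u‖ ^ 2 := by
    have hs := sq_nonneg (μ * ‖z - x‖ - ‖u' - u‖)
    have h5 : 2 * μ * ⟪z - x, u' - u⟫ ≤ 2 * μ * (‖z - x‖ * ‖u' - u‖) :=
      mul_le_mul_of_nonneg_left cs (by positivity)
    have h6 : (μ / 2 * ‖z - x‖ ^ 2 + 1 / (2 * μ) * ‖u' - u‖ ^ 2) * (2 * μ)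
        = μ ^ 2 * ‖z - x‖ ^ 2 + ‖u' - u‖ ^ 2 := by field_simp
    nlinarith [h5, hs]
  have e1 : ⟪z - x, u' - u⟫ = ⟪z, u'⟫ - ⟪u, z⟫ + ⟪u, x⟫ - ⟪x, u'⟫ := by
    simp only [inner_sub_left, inner_sub_right]
    rw [real_inner_comm z u, real_inner_comm x u]
    ring
  have e2 : ⟪x, u' - u⟫ = ⟪x, u'⟫ - ⟪x, u⟫ := inner_sub_right x u' u
  have e3 : ⟪u, z - x⟫ = ⟪u, z⟫ - ⟪u, x⟫ := inner_sub_right u z x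
  have e4 : ⟪u, x⟫ = ⟪x, u⟫ := real_inner_comm x u
  rw [hval]
  simp only
  linarith [h1, h4, e1 ▸ h4, e2, e3, e4, e1]

end Aux
/-- If `f : ℝ^n → ℝ` is `L_f`-smooth and `μ_f`-strongly convex with conjugate `f*`, and the
minimum nonzero singular value of `A` is at least `σ̲_min > 0` (i.e. `σ̲_min‖v‖ ≤ ‖Aᵀv‖`
for `v ∈ Range(A)`), then `Φ(λ) := -⟨b,λ⟩ - f*(-Aᵀλ)` is `(σ̲_min²/L_f)`-strongly concave
on the range of `A`. -/
theorem dual_strongly_concave_on_range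
    (n m : ℕ) (f : EuclideanSpace ℝ (Fin n) → ℝ) (Lf μf : ℝ)
    (hLf : 0 < Lf) (hμf : 0 < μf)
    (hdiff : Differentiable ℝ f)
    (hsmooth : ∀ x x', ‖gradient f x - gradient f x'‖ ≤ Lf * ‖x - x'‖)
    (hsc : ConvexOn ℝ Set.univ (fun x => f x - μf / 2 * ‖x‖ ^ 2))
    (A : EuclideanSpace ℝ (Fin n) →ₗ[ℝ] EuclideanSpace ℝ (Fin m))
    (b : EuclideanSpace ℝ (Fin m))
    (σmin : ℝ) (hσ : 0 < σmin)
    (hA : ∀ v ∈ LinearMap.range A, σmin * ‖v‖ ≤ ‖LinearMap.adjoint A v‖)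
    (fstar : EuclideanSpace ℝ (Fin n) → ℝ)
    (hfstar : ∀ y, IsLUB (Set.range fun x => ⟪x, y⟫ - f x) (fstar y))
    (Φ : EuclideanSpace ℝ (Fin m) → ℝ)
    (hΦ : ∀ lam, Φ lam = -⟪b, lam⟫ - fstar (-(LinearMap.adjoint A lam))) :
    ∀ lam ∈ LinearMap.range A, ∀ lam' ∈ LinearMap.range A,
      Φ lam' ≤ Φ lam + ⟪gradient Φ lam, lam' - lam⟫ -
        σmin ^ 2 / (2 * Lf) * ‖lam - lam'‖ ^ 2 := by
  have hstrong : ∀ x y, f x + ⟪gradient f x, y - x⟫ + μf / 2 * ‖y - x‖ ^ 2 ≤ f y :=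
    aux_strong_ineq hdiff hsc
  have hdesc : ∀ x y, f y ≤ f x + ⟪gradient f x, y - x⟫ + Lf / 2 * ‖y - x‖ ^ 2 :=
    aux_descent hLf hdiff hsmooth
  intro lam hlam lam' hlam'
  set T : EuclideanSpace ℝ (Fin m) →ₗ[ℝ] EuclideanSpace ℝ (Fin n) := LinearMap.adjoint A
    with hT
  obtain ⟨Cop, hCop0, hCop⟩ : ∃ C : ℝ, 0 ≤ C ∧ ∀ w, ‖T w‖ ≤ C * ‖w‖ :=
    ⟨‖LinearMap.toContinuousLinearMap T‖, norm_nonneg _, fun w => by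
      simpa [LinearMap.coe_toContinuousLinearMap] using
        (LinearMap.toContinuousLinearMap T).le_opNorm w⟩
  set u : EuclideanSpace ℝ (Fin n) := -(T lam) with hu
  set u' : EuclideanSpace ℝ (Fin n) := -(T lam') with hu'
  obtain ⟨x, hx⟩ := aux_grad_surj hμf hdiff hstrong u
  have hval : fstar u = ⟪x, u⟫ - f x := aux_fstar_eq hμf hstrong hfstar hx
  set G : EuclideanSpace ℝ (Fin m) := -b + A x with hG
  -- the key identity
  have hwu : ∀ ν, -(T ν) - u = -(T (ν - lam)) := by
    intro ν; rw [hu, map_sub]; abel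
  have hident : ∀ ν, Φ ν - Φ lam - ⟪G, ν - lam⟫
      = -(fstar (-(T ν)) - fstar u - ⟪x, -(T ν) - u⟫) := by
    intro ν
    have hinner : ⟪x, -(T ν) - u⟫ = -⟪A x, ν - lam⟫ := by
      rw [hwu, inner_neg_right, hT, LinearMap.adjoint_inner_right]
    have hGin : ⟪G, ν - lam⟫ = -⟪b, ν - lam⟫ + ⟪A x, ν - lam⟫ := by
      rw [hG, inner_add_left, inner_neg_left]
    have hbsub : ⟪b, ν - lam⟫ = ⟪b, ν⟫ - ⟪b, lam⟫ := inner_sub_right b ν lam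
    rw [hΦ ν, hΦ lam, hGin, hinner, hbsub, hu]
    ring
  -- gradient of Φ at lam is G
  have hgradΦ : gradient Φ lam = G := by
    apply HasGradientAt.gradient
    apply aux_hasGradientAt_of_sq_bound (C := 1 / (2 * μf) * Cop ^ 2)
    intro ν
    have hlow := aux_fstar_lower hLf hdesc hfstar hx hval (-(T ν))
    have hup := aux_fstar_upper hμf hstrong hfstar hx hval (-(T ν))
    have habs : |Φ ν - Φ lam - ⟪G, ν - lam⟫| ≤ 1 / (2 * μf) * ‖-(T ν) - u‖ ^ 2 := by
      rw [hident ν, abs_le]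
      have h0 : (0:ℝ) ≤ 1 / (2 * Lf) * ‖-(T ν) - u‖ ^ 2 := by positivity
      constructor
      · linarith [hup]
      · linarith [hlow]
    refine habs.trans ?_
    have h1 : ‖-(T ν) - u‖ ≤ Cop * ‖ν - lam‖ := by
      rw [hwu ν, norm_neg]
      exact hCop (ν - lam)
    have h2 : ‖-(T ν) - u‖ ^ 2 ≤ (Cop * ‖ν - lam‖) ^ 2 :=
      pow_le_pow_left₀ (norm_nonneg _) h1 2
    have h3 : (0:ℝ) ≤ 1 / (2 * μf) := by positivity
    calc 1 / (2 * μf) * ‖-(T ν) - u‖ ^ 2 ≤ 1 / (2 * μf) * (Cop * ‖ν - lam‖) ^ 2 :=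
          mul_le_mul_of_nonneg_left h2 h3
    _ = 1 / (2 * μf) * Cop ^ 2 * ‖ν - lam‖ ^ 2 := by ring
  -- conclude
  have hlow' := aux_fstar_lower hLf hdesc hfstar hx hval u'
  have hid' := hident lam'
  rw [hgradΦ]
  -- norm bound from singular value assumption
  have hmem : lam - lam' ∈ LinearMap.range A := Submodule.sub_mem _ hlam hlam'
  have hAbound := hA (lam - lam') hmem
  have hnorm : ‖u' - u‖ = ‖T (lam - lam')‖ := by
    rw [hwu lam', norm_neg, ← norm_neg (T (lam - lam')), ← map_neg, neg_sub]
  have hsq : σmin ^ 2 * ‖lam - lam'‖ ^ 2 ≤ ‖u' - u‖ ^ 2 := by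
    rw [hnorm]
    have := pow_le_pow_left₀ (by positivity : (0:ℝ) ≤ σmin * ‖lam - lam'‖) hAbound 2
    calc σmin ^ 2 * ‖lam - lam'‖ ^ 2 = (σmin * ‖lam - lam'‖) ^ 2 := by ring
    _ ≤ ‖T (lam - lam')‖ ^ 2 := this
  have hdiv : σmin ^ 2 / (2 * Lf) * ‖lam - lam'‖ ^ 2 ≤ 1 / (2 * Lf) * ‖u' - u‖ ^ 2 := by
    rw [div_mul_eq_mul_div, div_le_iff₀ (by positivity : (0:ℝ) < 2 * Lf)]
    calc σmin ^ 2 * ‖lam - lam'‖ ^ 2 ≤ ‖u' - u‖ ^ 2 := hsq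
    _ = 1 / (2 * Lf) * ‖u' - u‖ ^ 2 * (2 * Lf) := by field_simp
  have hfin : fstar u' - fstar u - ⟪x, u' - u⟫ ≥ 1 / (2 * Lf) * ‖u' - u‖ ^ 2 := by
    linarith [hlow']
  rw [← hu'] at hid'
  linarith [hid', hfin, hdiv]
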